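/- Let M(a,b) be the multigraph consisting of two vertices u,v joined by three parallel edges, with a pendant edges at u and b pendant edges at v, where a + b = m − 3. Then φ_{M(a,b)}(x) = x^{m−5}(x⁴ − (m+6)x² + ab). Consequently ρ(M(m−3,0))² = m + 6 and ρ(M(m−4,1))² = (m + 6 + √(m² + 8m + 52))/2. -/

import Mathlib

open Polynomial

/-- Adjacency matrix of the multigraph M(a,b): vertices u = 0 and v = 1 joined by three
parallel edges, a pendant edges at u (vertices 2,…,a+1) and b pendant edges at v
(vertices a+2,…,a+b+1). -/
def Mab (a b : ℕ) : Matrix (Fin (a + b + 2)) (Fin (a + b + 2)) ℝ :=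
  Matrix.of fun i j =>
    if (i.val = 0 ∧ j.val = 1) ∨ (i.val = 1 ∧ j.val = 0) then 3
    else if (i.val = 0 ∧ 2 ≤ j.val ∧ j.val ≤ a + 1) ∨
            (j.val = 0 ∧ 2 ≤ i.val ∧ i.val ≤ a + 1) then 1
    else if (i.val = 1 ∧ a + 2 ≤ j.val) ∨ (j.val = 1 ∧ a + 2 ≤ i.val) then 1
    else 0

section Aux
open Matrix
set_option maxHeartbeats 8000000
set_option synthInstance.maxHeartbeats 1000000

def Bmat (a b : ℕ) : Matrix (Fin 4) (Fin 4) ℝ :=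
  Matrix.of fun k l =>
    if k = 0 then (if l = 1 then 3 else if l = 2 then (a:ℝ) else 0)
    else if k = 1 then (if l = 0 then 3 else if l = 3 then (b:ℝ) else 0)
    else if k = 2 then (if l = 0 then 1 else 0)
    else (if l = 1 then 1 else 0)

def MU (a b : ℕ) : Matrix (Fin (a + b + 2)) (Fin 4) ℝ :=
  Matrix.of fun i k =>
    if k = 0 then (if i.val = 0 then 1 else 0)
    else if k = 1 then (if i.val = 1 then 1 else 0)
    else if k = 2 then (if 2 ≤ i.val ∧ i.val ≤ a + 1 then 1 else 0)
    else (if a + 2 ≤ i.val then 1 else 0)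

def MV (a b : ℕ) : Matrix (Fin 4) (Fin (a + b + 2)) ℝ :=
  Matrix.of fun k j =>
    if k = 0 then (if j.val = 1 then 3 else if 2 ≤ j.val ∧ j.val ≤ a + 1 then 1 else 0)
    else if k = 1 then (if j.val = 0 then 3 else if a + 2 ≤ j.val then 1 else 0)
    else if k = 2 then (if j.val = 0 then 1 else 0)
    else (if j.val = 1 then 1 else 0)


lemma det_smul_one_sub {K : Type*} [Field K] {k : ℕ} (t : K) (ht : t ≠ 0)
    (M : Matrix (Fin k) (Fin k) K) :
    det (t • (1 : Matrix (Fin k) (Fin k) K) - M) = t ^ k * det (1 - t⁻¹ • M) := by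
  have : t • (1 : Matrix (Fin k) (Fin k) K) - M = t • (1 - t⁻¹ • M) := by
    rw [smul_sub, smul_smul, mul_inv_cancel₀ ht, one_smul]
  rw [this, det_smul, Fintype.card_fin]

lemma charpoly_mul_comm' {n r : ℕ} (U : Matrix (Fin n) (Fin r) ℝ) (V : Matrix (Fin r) (Fin n) ℝ) :
    X ^ r * (U * V).charpoly = X ^ n * (V * U).charpoly := by
  have hinj := RatFunc.algebraMap_injective ℝ
  apply hinj
  set φ := algebraMap ℝ[X] (RatFunc ℝ) with hφ
  have hX : φ X ≠ 0 := by
    simpa [hφ, RatFunc.algebraMap_X] using (RatFunc.X_ne_zero (K := ℝ))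
  set t := φ X with htdef
  have key : ∀ (k : ℕ) (M : Matrix (Fin k) (Fin k) ℝ),
      φ M.charpoly = det (t • (1 : Matrix (Fin k) (Fin k) (RatFunc ℝ)) - M.map (φ.comp C)) := by
    intro k M
    rw [Matrix.charpoly, RingHom.map_det]
    congr 1
    ext i j
    by_cases h : i = j
    · subst h
      simp [charmatrix_apply_eq, Matrix.one_apply, Matrix.smul_apply]
      rfl
    · simp [charmatrix_apply_ne _ _ _ h, Matrix.one_apply, h, Matrix.smul_apply]
  have hmapUV : (U * V).map (φ.comp C) = U.map (φ.comp C) * V.map (φ.comp C) :=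
    Matrix.map_mul
  have hmapVU : (V * U).map (φ.comp C) = V.map (φ.comp C) * U.map (φ.comp C) :=
    Matrix.map_mul
  set U' := U.map (φ.comp C)
  set V' := V.map (φ.comp C)
  rw [_root_.map_mul, _root_.map_mul, map_pow, map_pow, key n (U*V), key r (V*U), hmapUV, hmapVU,
    det_smul_one_sub _ hX, det_smul_one_sub _ hX]
  have h1 : (1 : Matrix (Fin n) (Fin n) (RatFunc ℝ)) - t⁻¹ • (U' * V')
      = 1 - (t⁻¹ • U') * V' := by rw [Matrix.smul_mul]
  have h2 : (1 : Matrix (Fin r) (Fin r) (RatFunc ℝ)) - t⁻¹ • (V' * U')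
      = 1 - V' * (t⁻¹ • U') := by rw [Matrix.mul_smul]
  rw [h1, h2, det_one_sub_mul_comm]
  ring


lemma sum_ind_val {n : ℕ} (c : ℕ) (h : c < n) (f : Fin n → ℝ) :
    ∑ j : Fin n, (if j.val = c then f j else 0) = f ⟨c, h⟩ := by
  rw [Finset.sum_eq_single ⟨c, h⟩]
  · simp
  · intro j _ hj
    rw [if_neg]
    intro hc
    exact hj (Fin.ext hc)
  · simp

lemma sum_ind_a (a b : ℕ) :
    ∑ j : Fin (a + b + 2), (if 2 ≤ j.val ∧ j.val ≤ a + 1 then (1:ℝ) else 0) = a := by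
  rw [Fin.sum_univ_eq_sum_range (fun v => if 2 ≤ v ∧ v ≤ a + 1 then (1:ℝ) else 0)]
  rw [Finset.sum_boole]
  have : (Finset.range (a + b + 2)).filter (fun v => 2 ≤ v ∧ v ≤ a + 1)
      = Finset.Icc 2 (a + 1) := by
    ext v; simp only [Finset.mem_filter, Finset.mem_range, Finset.mem_Icc]; omega
  rw [this, Nat.card_Icc]
  push_cast
  ring
lemma sum_ind_b (a b : ℕ) :
    ∑ j : Fin (a + b + 2), (if a + 2 ≤ j.val then (1:ℝ) else 0) = b := by
  rw [Fin.sum_univ_eq_sum_range (fun v => if a + 2 ≤ v then (1:ℝ) else 0)]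
  rw [Finset.sum_boole]
  have : (Finset.range (a + b + 2)).filter (fun v => a + 2 ≤ v)
      = Finset.Icc (a + 2) (a + b + 1) := by
    ext v; simp only [Finset.mem_filter, Finset.mem_range, Finset.mem_Icc]; omega
  rw [this, Nat.card_Icc, show a + b + 1 + 1 - (a + 2) = b by omega]


lemma Mab_eq_mul (a b : ℕ) : Mab a b = MU a b * MV a b := by
  ext i j
  simp only [Matrix.mul_apply, Fin.sum_univ_four, MU, MV, Mab, Matrix.of_apply,
    show (0:Fin 4) ≠ 1 by decide, show (0:Fin 4) ≠ 2 by decide,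
    if_true, if_pos rfl, show ((1:Fin 4) = 0) = False by simp, show ((2:Fin 4) = 0) = False by simp,
    show ((3:Fin 4) = 0) = False by simp, show ((2:Fin 4) = 1) = False by simp,
    show ((3:Fin 4) = 1) = False by simp, show ((3:Fin 4) = 2) = False by simp,
    if_false]
  split_ifs <;> first | (exfalso; omega) | norm_num


lemma VU_eq (a b : ℕ) : MV a b * MU a b = Bmat a b := by
  have hn : 2 ≤ a + b + 2 := by omega
  ext k l
  fin_cases k <;> fin_cases l <;>
    simp only [Matrix.mul_apply, MV, MU, Bmat, Matrix.of_apply, Fin.isValue, Fin.ext_iff,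
      show ((0:Fin 4):ℕ) = 0 from rfl, show ((1:Fin 4):ℕ) = 1 from rfl,
      show ((2:Fin 4):ℕ) = 2 from rfl, show ((3:Fin 4):ℕ) = 3 from rfl] <;>
    norm_num
  all_goals (try exact Finset.sum_eq_zero fun j _ => by split_ifs <;> first | (exfalso; omega) | (exfalso; simp only [← Fin.val_eq_zero_iff] at *; omega) | norm_num)
  -- remaining nonzero entries
  · trans (∑ x : Fin (a+b+2), if (x:ℕ) = 1 then (3:ℝ) else 0)
    · exact Finset.sum_congr rfl fun x _ => by
        split_ifs <;> first | rfl | (exfalso; omega) | norm_num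
    · exact sum_ind_val 1 (by omega) _
  · trans (∑ x : Fin (a+b+2), if 2 ≤ (x:ℕ) ∧ (x:ℕ) ≤ a + 1 then (1:ℝ) else 0)
    · exact Finset.sum_congr rfl fun x _ => by
        split_ifs <;> first | rfl | (exfalso; omega) | norm_num
    · exact sum_ind_a a b
  · trans (∑ x : Fin (a+b+2), if a + 2 ≤ (x:ℕ) then (1:ℝ) else 0)
    · exact Finset.sum_congr rfl fun x _ => by
        split_ifs <;> first | rfl | (exfalso; omega) | (exfalso; simp only [← Fin.val_eq_zero_iff] at *; omega) | norm_num
    · exact sum_ind_b a b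
  · trans (∑ x : Fin (a+b+2), if (x:ℕ) = 1 then (1:ℝ) else 0)
    · exact Finset.sum_congr rfl fun x _ => by
        split_ifs <;> first | rfl | (exfalso; omega) | norm_num
    · exact sum_ind_val 1 (by omega) _


lemma charB (a b : ℕ) :
    (Bmat a b).charpoly = X^4 - C ((a:ℝ) + b + 9) * X^2 + C ((a:ℝ) * b) := by
  have h : charmatrix (Bmat a b) =
      !![X, -C 3, -C (a:ℝ), C 0; -C 3, X, C 0, -C (b:ℝ); -C 1, C 0, X, C 0; C 0, -C 1, C 0, X] := by
    ext i j
    fin_cases i <;> fin_cases j <;>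
      simp [Bmat, charmatrix_apply_eq, charmatrix_apply_ne]
  rw [Matrix.charpoly, h]
  simp [Matrix.det_succ_row_zero, Fin.sum_univ_succ, Fin.succAbove]
  simp only [map_ofNat, _root_.map_one, map_zero, Polynomial.C_add, Polynomial.C_mul, map_natCast]
  ring

end Aux

lemma charMab (a b m : ℕ) (hm : m = a + b + 3) (h5 : 5 ≤ m) :
    (Mab a b).charpoly =
      X ^ (m - 5) * (X ^ 4 - C ((m : ℝ) + 6) * X ^ 2 + C ((a : ℝ) * b)) := by
  have h1 : X ^ 4 * (Mab a b).charpoly = X ^ (a + b + 2) * (Bmat a b).charpoly := by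
    rw [Mab_eq_mul, charpoly_mul_comm', VU_eq]
  have hmr : ((m : ℝ) + 6) = (a : ℝ) + b + 9 := by
    subst hm; push_cast; ring
  have h2 : (X : ℝ[X]) ^ (a + b + 2) = X ^ 4 * X ^ (m - 5) := by
    rw [← pow_add]
    congr 1
    omega
  apply mul_left_cancel₀ (pow_ne_zero 4 (Polynomial.X_ne_zero (R := ℝ)))
  rw [h1, h2, charB, hmr, mul_assoc]

/-- φ_{M(a,b)}(x) = x^{m-5}(x⁴ - (m+6)x² + ab), and consequently
ρ(M(m-3,0))² = m+6 and ρ(M(m-4,1))² = (m + 6 + √(m² + 8m + 52))/2. -/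
theorem stmt_8 (a b m : ℕ) (hm : m = a + b + 3) (h5 : 5 ≤ m) :
    (Mab a b).charpoly =
      X ^ (m - 5) * (X ^ 4 - C ((m : ℝ) + 6) * X ^ 2 + C ((a : ℝ) * b)) ∧
    IsGreatest {x : ℝ | (Mab (m - 3) 0).charpoly.IsRoot x}
      (Real.sqrt ((m : ℝ) + 6)) ∧
    IsGreatest {x : ℝ | (Mab (m - 4) 1).charpoly.IsRoot x}
      (Real.sqrt (((m : ℝ) + 6 + Real.sqrt ((m : ℝ) ^ 2 + 8 * m + 52)) / 2)) := by
  refine ⟨charMab a b m hm h5, ?_, ?_⟩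
  · -- M(m-3, 0)
    have hc : (Mab (m - 3) 0).charpoly =
        X ^ (m - 5) * (X ^ 4 - C ((m : ℝ) + 6) * X ^ 2 + C (((m - 3 : ℕ) : ℝ) * (0 : ℕ))) :=
      charMab (m - 3) 0 m (by omega) h5
    have hm6 : (0:ℝ) ≤ (m : ℝ) + 6 := by positivity
    have hs2 : Real.sqrt ((m : ℝ) + 6) ^ 2 = (m : ℝ) + 6 := Real.sq_sqrt hm6
    constructor
    · show Polynomial.IsRoot _ _
      rw [hc]
      simp only [IsRoot, eval_mul, eval_pow, eval_add, eval_sub, eval_C, eval_X, eval_ofNat]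
      have : Real.sqrt ((m : ℝ) + 6) ^ 4 - ((m : ℝ) + 6) * Real.sqrt ((m : ℝ) + 6) ^ 2
          + ((m - 3 : ℕ) : ℝ) * ((0 : ℕ) : ℝ) = 0 := by
        rw [show Real.sqrt ((m : ℝ) + 6) ^ 4 = (Real.sqrt ((m : ℝ) + 6) ^ 2) ^ 2 by ring, hs2]
        push_cast
        ring
      rw [this, mul_zero]
    · intro x hx
      rw [Set.mem_setOf_eq, hc] at hx
      simp only [IsRoot, eval_mul, eval_pow, eval_add, eval_sub, eval_C, eval_X,
        eval_ofNat] at hx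
      rcases mul_eq_zero.mp hx with h | h
      · have hx0 : x = 0 := by
          by_contra hne
          exact pow_ne_zero _ hne h
        rw [hx0]; exact Real.sqrt_nonneg _
      · have hq : x ^ 2 * (x ^ 2 - ((m : ℝ) + 6)) = 0 := by
          push_cast at h
          nlinarith [h]
        have hx2 : x ^ 2 ≤ (m : ℝ) + 6 := by
          rcases mul_eq_zero.mp hq with h2 | h2
          · nlinarith [h2]
          · nlinarith [h2]
        calc x ≤ |x| := le_abs_self x
        _ = Real.sqrt (x ^ 2) := (Real.sqrt_sq_eq_abs x).symm
        _ ≤ Real.sqrt ((m : ℝ) + 6) := Real.sqrt_le_sqrt hx2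
  · -- M(m-4, 1)
    have hc : (Mab (m - 4) 1).charpoly =
        X ^ (m - 5) * (X ^ 4 - C ((m : ℝ) + 6) * X ^ 2 + C (((m - 4 : ℕ) : ℝ) * (1 : ℕ))) :=
      charMab (m - 4) 1 m (by omega) h5
    have hcast : ((m - 4 : ℕ) : ℝ) * ((1 : ℕ) : ℝ) = (m : ℝ) - 4 := by
      rw [Nat.cast_sub (by omega : 4 ≤ m)]
      push_cast
      ring
    set D := Real.sqrt ((m : ℝ) ^ 2 + 8 * m + 52) with hDdef
    have hD0 : (0:ℝ) ≤ D := Real.sqrt_nonneg _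
    have hD : D ^ 2 = (m : ℝ) ^ 2 + 8 * m + 52 := Real.sq_sqrt (by positivity)
    have ht0 : (0:ℝ) ≤ ((m : ℝ) + 6 + D) / 2 := by
      have : (0:ℝ) ≤ (m : ℝ) := Nat.cast_nonneg m
      linarith
    set t := ((m : ℝ) + 6 + D) / 2 with htdef
    have hs2 : Real.sqrt t ^ 2 = t := Real.sq_sqrt ht0
    constructor
    · show Polynomial.IsRoot _ _
      rw [hc]
      simp only [IsRoot, eval_mul, eval_pow, eval_add, eval_sub, eval_C, eval_X, eval_ofNat]
      have : Real.sqrt t ^ 4 - ((m : ℝ) + 6) * Real.sqrt t ^ 2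
          + ((m - 4 : ℕ) : ℝ) * ((1 : ℕ) : ℝ) = 0 := by
        rw [show Real.sqrt t ^ 4 = (Real.sqrt t ^ 2) ^ 2 by ring, hs2, hcast, htdef]
        linear_combination hD / 4
      rw [this, mul_zero]
    · intro x hx
      rw [Set.mem_setOf_eq, hc] at hx
      simp only [IsRoot, eval_mul, eval_pow, eval_add, eval_sub, eval_C, eval_X,
        eval_ofNat] at hx
      rcases mul_eq_zero.mp hx with h | h
      · have hx0 : x = 0 := by
          by_contra hne
          exact pow_ne_zero _ hne h
        rw [hx0]; exact Real.sqrt_nonneg _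
      · have hq : x ^ 4 - ((m : ℝ) + 6) * x ^ 2 + ((m : ℝ) - 4) = 0 := by
          rw [← hcast]; linarith [h]
        have key : (x ^ 2 - t) * (x ^ 2 - ((m : ℝ) + 6 - D) / 2) = 0 := by
          rw [htdef]
          linear_combination hq - hD / 4
        have hx2 : x ^ 2 ≤ t := by
          rcases mul_eq_zero.mp key with h2 | h2
          · nlinarith [h2]
          · have : x ^ 2 = ((m : ℝ) + 6 - D) / 2 := by linarith [h2]
            rw [this, htdef]
            linarith
        calc x ≤ |x| := le_abs_self x
        _ = Real.sqrt (x ^ 2) := (Real.sqrt_sq_eq_abs x).symm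
        _ ≤ Real.sqrt t := Real.sqrt_le_sqrt hx2
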